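/- Unbiasedness of the doubly robust estimating equation (13) in model 𝓜_y (correct outcome law, arbitrary baseline propensity). Fix a distinguished element 0 ∈ 𝒴, let α(y,z,c) be the true log odds-ratio function defined from p as α(y,z,c) = log[ p(y | A=1, z, c) · p(0 | A=0, z, c) / ( p(y | A=0, z, c) · p(0 | A=1, z, c) ) ], and for g : 𝒴 × 𝒞 → ℝ define m_g(z,c) = ( Σ_y e^{α(y,z,c)} g(y,c) p(y | A=0, z, c) ) / ( Σ_y e^{α(y,z,c)} p(y | A=0, z, c) ). For an arbitrary β* : 𝒵 × 𝒞 → ℝ set π*(y,z,c) = expit(α(y,z,c) + β*(z,c)), where expit(x) = eˣ/(1+eˣ). Assume Y₀ and Z are conditionally independent given C. Then for all ω : 𝒵 × 𝒞 → ℝ and g : 𝒴 × 𝒞 → ℝ: Σ_{a,y,z,c} p(a,y,z,c) · ( ω(z,c) − E[ω | c] ) · ( ((1−a)/(1−π*(y,z,c)))·g(y,c) + ((a−π*(y,z,c))/(1−π*(y,z,c)))·m_g(z,c) ) = 0, where E[ω | c] = Σ_z ω(z,c) p(z | c). -/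

import Mathlib

noncomputable def expit (x : ℝ) : ℝ := Real.exp x / (1 + Real.exp x)

/-- Unbiasedness of the doubly robust estimating equation (13) in model `𝓜_y`
(correct outcome law, arbitrary baseline propensity `β*`): with `α` the true
log odds-ratio, `m_g` the odds-ratio weighted outcome regression,
`π*(y,z,c) = expit(α(y,z,c) + β*(z,c))`, and `Y₀ ⟂ Z | C`, for all `w` and `g`:
`Σ p(a,y,z,c) (w(z,c) - E[w|c]) ((1-a)/(1-π*) g(y,c) + (a-π*)/(1-π*) m_g(z,c)) = 0`. -/
theorem dr_estimating_equation_unbiased_My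
    {Y Z C : Type*} [Fintype Y] [Fintype Z] [Fintype C]
    [Nonempty Y] [Nonempty Z] [Nonempty C]
    (p : Bool → Y → Z → C → ℝ)
    (hpos : ∀ a y z c, 0 < p a y z c)
    (hsum : ∑ a : Bool, ∑ y : Y, ∑ z : Z, ∑ c : C, p a y z c = 1)
    -- conditional independence of `Y₀` and `Z` given `C`
    (hCI : ∀ (y : Y) (z : Z) (c : C),
        (∑ a : Bool, p a y z c) / (∑ a : Bool, ∑ y' : Y, ∑ z' : Z, p a y' z' c)
          = ((∑ a : Bool, ∑ z' : Z, p a y z' c)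
                / (∑ a : Bool, ∑ y' : Y, ∑ z' : Z, p a y' z' c))
            * ((∑ a : Bool, ∑ y' : Y, p a y' z c)
                / (∑ a : Bool, ∑ y' : Y, ∑ z' : Z, p a y' z' c)))
    (y₀ : Y) (β : Z → C → ℝ) (w : Z → C → ℝ) (g : Y → C → ℝ) :
    -- conditional pmf of `Y₀` given `A = a, Z = z, C = c`
    let pc : Bool → Y → Z → C → ℝ :=
      fun a y z c => p a y z c / ∑ y' : Y, p a y' z c
    -- true log generalized odds ratio
    let α : Y → Z → C → ℝ := fun y z c =>
      Real.log (pc true y z c * pc false y₀ z c / (pc false y z c * pc true y₀ z c))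
    -- odds-ratio weighted outcome regression `m_g(z,c)`
    let mg : Z → C → ℝ := fun z c =>
      (∑ y : Y, Real.exp (α y z c) * g y c * pc false y z c)
        / (∑ y : Y, Real.exp (α y z c) * pc false y z c)
    -- (possibly misspecified) extended propensity score
    let πs : Y → Z → C → ℝ := fun y z c => expit (α y z c + β z c)
    -- `E[w | c] = Σ_z w(z,c) p(z | c)`
    let Ew : C → ℝ := fun c => ∑ z : Z, w z c *
      ((∑ a : Bool, ∑ y' : Y, p a y' z c)
        / (∑ a : Bool, ∑ y' : Y, ∑ z' : Z, p a y' z' c))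
    ∑ a : Bool, ∑ y : Y, ∑ z : Z, ∑ c : C,
      p a y z c * (w z c - Ew c) *
        ((1 - if a then (1 : ℝ) else 0) / (1 - πs y z c) * g y c
          + ((if a then (1 : ℝ) else 0) - πs y z c) / (1 - πs y z c) * mg z c)
      = 0 := by
  intro pc α mg πs Ew
  classical
  have hSpos : ∀ (a : Bool) (z : Z) (c : C), 0 < ∑ y : Y, p a y z c := fun a z c =>
    Finset.sum_pos (fun y _ => hpos a y z c) Finset.univ_nonempty
  have hpcpos : ∀ (a : Bool) (y : Y) (z : Z) (c : C), 0 < pc a y z c := fun a y z c =>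
    div_pos (hpos a y z c) (hSpos a z c)
  have hexpα : ∀ y z c, Real.exp (α y z c)
      = pc true y z c * pc false y₀ z c / (pc false y z c * pc true y₀ z c) := by
    intro y z c
    exact Real.exp_log (div_pos (mul_pos (hpcpos _ _ _ _) (hpcpos _ _ _ _))
      (mul_pos (hpcpos _ _ _ _) (hpcpos _ _ _ _)))
  -- expit facts
  have hexpit_lt : ∀ x : ℝ, 1 - expit x = 1 / (1 + Real.exp x) := by
    intro x
    have h : (0:ℝ) < 1 + Real.exp x := by positivity
    unfold expit
    field_simp
    ring
  have hexpit_ne : ∀ x : ℝ, 1 - expit x ≠ 0 := by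
    intro x; rw [hexpit_lt]; positivity
  have htrue : ∀ (x gv mv : ℝ),
      (1 - 1) / (1 - expit x) * gv + (1 - expit x) / (1 - expit x) * mv = mv := by
    intro x gv mv
    rw [div_self (hexpit_ne x), sub_self, zero_div, zero_mul, zero_add, one_mul]
  have hfalse : ∀ (x gv mv : ℝ),
      (1 - 0) / (1 - expit x) * gv + (0 - expit x) / (1 - expit x) * mv
        = gv + Real.exp x * (gv - mv) := by
    intro x gv mv
    have h : (0:ℝ) < 1 + Real.exp x := by positivity
    rw [hexpit_lt]
    unfold expit
    field_simp
    ring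
  -- key per (z,c) reduction
  have key : ∀ (z : Z) (c : C),
      (∑ y : Y, p true y z c * (w z c - Ew c) *
          ((1 - 1) / (1 - πs y z c) * g y c
            + (1 - πs y z c) / (1 - πs y z c) * mg z c))
        + ∑ y : Y, p false y z c * (w z c - Ew c) *
          ((1 - 0) / (1 - πs y z c) * g y c
            + (0 - πs y z c) / (1 - πs y z c) * mg z c)
      = (w z c - Ew c) * ∑ y : Y, (p true y z c + p false y z c) * g y c := by
    intro z c
    have hS1 := hSpos true z c
    have hS0 := hSpos false z c
    set K : ℝ := pc false y₀ z c / pc true y₀ z c with hK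
    have hKpos : 0 < K := div_pos (hpcpos _ _ _ _) (hpcpos _ _ _ _)
    have hnum : ∀ y : Y, Real.exp (α y z c) * g y c * pc false y z c
        = K * (pc true y z c * g y c) := by
      intro y
      rw [hexpα, hK]
      have h0 : pc false y z c ≠ 0 := (hpcpos _ _ _ _).ne'
      have h1 : pc true y₀ z c ≠ 0 := (hpcpos _ _ _ _).ne'
      field_simp
    have hden : ∀ y : Y, Real.exp (α y z c) * pc false y z c = K * pc true y z c := by
      intro y
      rw [hexpα, hK]
      have h0 : pc false y z c ≠ 0 := (hpcpos _ _ _ _).ne'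
      have h1 : pc true y₀ z c ≠ 0 := (hpcpos _ _ _ _).ne'
      field_simp
    have hsum1 : ∑ y : Y, pc true y z c = 1 := by
      show ∑ y : Y, p true y z c / (∑ y' : Y, p true y' z c) = 1
      rw [← Finset.sum_div, div_self hS1.ne']
    have hmgM : mg z c = ∑ y : Y, pc true y z c * g y c := by
      show (∑ y : Y, Real.exp (α y z c) * g y c * pc false y z c)
          / (∑ y : Y, Real.exp (α y z c) * pc false y z c) = _
      rw [Finset.sum_congr rfl fun y _ => hnum y,
          Finset.sum_congr rfl fun y _ => hden y,
          ← Finset.mul_sum, ← Finset.mul_sum, hsum1, mul_one]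
      exact mul_div_cancel_left₀ _ hKpos.ne'
    have hpcsum : ∑ y : Y, pc true y z c * g y c
        = (∑ y : Y, p true y z c * g y c) / (∑ y' : Y, p true y' z c) := by
      rw [Finset.sum_div]
      exact Finset.sum_congr rfl fun y _ => by
        show p true y z c / _ * g y c = _
        ring
    have hA : ∑ y : Y, p true y z c * mg z c = ∑ y : Y, p true y z c * g y c := by
      rw [← Finset.sum_mul, hmgM, hpcsum, mul_comm, div_mul_cancel₀ _ hS1.ne']
    -- the a = 0 correction term vanishes
    have hA2 : ∀ y : Y, Real.exp (α y z c) * p false y z c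
        = K * p true y z c * (∑ y' : Y, p false y' z c) / (∑ y' : Y, p true y' z c) := by
      intro y
      have hp0 : pc false y z c * (∑ y' : Y, p false y' z c) = p false y z c :=
        div_mul_cancel₀ _ hS0.ne'
      calc Real.exp (α y z c) * p false y z c
          = (Real.exp (α y z c) * pc false y z c) * (∑ y' : Y, p false y' z c) := by
            rw [mul_assoc, hp0]
        _ = (K * pc true y z c) * (∑ y' : Y, p false y' z c) := by rw [hden y]
        _ = K * p true y z c * (∑ y' : Y, p false y' z c) / (∑ y' : Y, p true y' z c) := by
            rw [show pc true y z c = p true y z c / (∑ y' : Y, p true y' z c) from rfl]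
            ring
    have hzero : ∑ y : Y, p true y z c * (g y c - mg z c) = 0 := by
      have : ∀ y : Y, p true y z c * (g y c - mg z c)
          = p true y z c * g y c - p true y z c * mg z c := fun y => by ring
      rw [Finset.sum_congr rfl fun y _ => this y, Finset.sum_sub_distrib, hA, sub_self]
    have hB : ∑ y : Y, p false y z c * (Real.exp (α y z c + β z c) * (g y c - mg z c))
        = 0 := by
      have hpt : ∀ y : Y,
          p false y z c * (Real.exp (α y z c + β z c) * (g y c - mg z c))
            = Real.exp (β z c) * (K * (∑ y' : Y, p false y' z c)
                / (∑ y' : Y, p true y' z c))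
              * (p true y z c * (g y c - mg z c)) := by
        intro y
        rw [Real.exp_add]
        calc p false y z c * (Real.exp (α y z c) * Real.exp (β z c) * (g y c - mg z c))
            = (Real.exp (α y z c) * p false y z c)
                * (Real.exp (β z c) * (g y c - mg z c)) := by ring
          _ = (K * p true y z c * (∑ y' : Y, p false y' z c)
                / (∑ y' : Y, p true y' z c))
                * (Real.exp (β z c) * (g y c - mg z c)) := by rw [hA2 y]
          _ = _ := by ring
      rw [Finset.sum_congr rfl fun y _ => hpt y, ← Finset.mul_sum, hzero, mul_zero]
    -- assemble
    have e0 : ∀ y : Y, p true y z c * (w z c - Ew c) *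
          ((1 - 1) / (1 - πs y z c) * g y c
            + (1 - πs y z c) / (1 - πs y z c) * mg z c)
        = p true y z c * (w z c - Ew c) * mg z c := fun y => by
      rw [show πs y z c = expit (α y z c + β z c) from rfl, htrue]
    have e0' : ∀ y : Y, p false y z c * (w z c - Ew c) *
          ((1 - 0) / (1 - πs y z c) * g y c
            + (0 - πs y z c) / (1 - πs y z c) * mg z c)
        = p false y z c * (w z c - Ew c) *
            (g y c + Real.exp (α y z c + β z c) * (g y c - mg z c)) := fun y => by
      rw [show πs y z c = expit (α y z c + β z c) from rfl, hfalse]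
    rw [Finset.sum_congr rfl fun y _ => e0 y, Finset.sum_congr rfl fun y _ => e0' y]
    have e1 : ∑ y : Y, p true y z c * (w z c - Ew c) * mg z c
        = (w z c - Ew c) * ∑ y : Y, p true y z c * g y c := by
      rw [← hA, Finset.mul_sum]
      exact Finset.sum_congr rfl fun y _ => by ring
    have e2 : ∑ y : Y, p false y z c * (w z c - Ew c) *
          (g y c + Real.exp (α y z c + β z c) * (g y c - mg z c))
        = (w z c - Ew c) * ∑ y : Y, p false y z c * g y c := by
      have expand : ∀ y : Y, p false y z c * (w z c - Ew c) *
            (g y c + Real.exp (α y z c + β z c) * (g y c - mg z c))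
          = (w z c - Ew c) * (p false y z c * g y c)
            + (w z c - Ew c) *
              (p false y z c * (Real.exp (α y z c + β z c) * (g y c - mg z c))) :=
        fun y => by ring
      rw [Finset.sum_congr rfl fun y _ => expand y, Finset.sum_add_distrib,
          ← Finset.mul_sum, ← Finset.mul_sum, hB, mul_zero, add_zero]
    rw [e1, e2, ← mul_add, ← Finset.sum_add_distrib]
    exact congrArg _ (Finset.sum_congr rfl fun y _ => (add_mul _ _ _).symm)
  -- reorder the quadruple sum
  have swap : ∀ (F : Y → Z → C → ℝ),
      (∑ y : Y, ∑ z : Z, ∑ c : C, F y z c) = ∑ c : C, ∑ z : Z, ∑ y : Y, F y z c := by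
    intro F
    calc ∑ y : Y, ∑ z : Z, ∑ c : C, F y z c
        = ∑ z : Z, ∑ y : Y, ∑ c : C, F y z c := Finset.sum_comm
      _ = ∑ z : Z, ∑ c : C, ∑ y : Y, F y z c :=
          Finset.sum_congr rfl fun z _ => Finset.sum_comm
      _ = ∑ c : C, ∑ z : Z, ∑ y : Y, F y z c := Finset.sum_comm
  rw [Fintype.sum_bool]
  simp only [if_true, Bool.false_eq_true, if_false]
  rw [swap, swap, ← Finset.sum_add_distrib]
  apply Finset.sum_eq_zero
  intro c _
  rw [← Finset.sum_add_distrib]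
  simp only [key]
  -- now use conditional independence
  set T : ℝ := ∑ a : Bool, ∑ y' : Y, ∑ z' : Z, p a y' z' c with hTdef
  have hTpos : 0 < T := by
    refine Finset.sum_pos (fun a _ => ?_) Finset.univ_nonempty
    exact Finset.sum_pos (fun y _ => Finset.sum_pos (fun z _ => hpos a y z c)
      Finset.univ_nonempty) Finset.univ_nonempty
  have hq : ∀ (y : Y) (z : Z), p true y z c + p false y z c
      = (∑ a : Bool, ∑ z' : Z, p a y z' c) * (∑ a : Bool, ∑ y' : Y, p a y' z c) / T := by
    intro y z
    have h := hCI y z c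
    have habool : (∑ a : Bool, p a y z c) = p true y z c + p false y z c :=
      Fintype.sum_bool _
    rw [habool] at h
    rw [div_mul_div_comm] at h
    rw [div_eq_div_iff hTpos.ne' (mul_pos hTpos hTpos).ne'] at h
    rw [eq_div_iff hTpos.ne']
    apply mul_right_cancel₀ hTpos.ne'
    linear_combination h
  have hsumy : ∀ z : Z, ∑ y : Y, (p true y z c + p false y z c) * g y c
      = (∑ a : Bool, ∑ y' : Y, p a y' z c)
        * ((∑ y : Y, (∑ a : Bool, ∑ z' : Z, p a y z' c) * g y c) / T) := by
    intro z
    calc ∑ y : Y, (p true y z c + p false y z c) * g y c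
        = ∑ y : Y, (∑ a : Bool, ∑ y' : Y, p a y' z c)
            * (((∑ a : Bool, ∑ z' : Z, p a y z' c) * g y c) / T) := by
          refine Finset.sum_congr rfl fun y _ => ?_
          rw [hq y z]
          ring
      _ = _ := by rw [← Finset.mul_sum, Finset.sum_div]
  simp only [hsumy]
  have hQzT : ∑ z : Z, (∑ a : Bool, ∑ y' : Y, p a y' z c) = T := by
    rw [hTdef]
    calc ∑ z : Z, ∑ a : Bool, ∑ y' : Y, p a y' z c
        = ∑ a : Bool, ∑ z : Z, ∑ y' : Y, p a y' z c := Finset.sum_comm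
      _ = ∑ a : Bool, ∑ y' : Y, ∑ z : Z, p a y' z c :=
          Finset.sum_congr rfl fun a _ => Finset.sum_comm
  have hEwT : Ew c * T = ∑ z : Z, w z c * (∑ a : Bool, ∑ y' : Y, p a y' z c) := by
    show (∑ z : Z, w z c * ((∑ a : Bool, ∑ y' : Y, p a y' z c) / T)) * T = _
    rw [Finset.sum_mul]
    refine Finset.sum_congr rfl fun z _ => ?_
    field_simp
  set G : ℝ := (∑ y : Y, (∑ a : Bool, ∑ z' : Z, p a y z' c) * g y c) / T with hG
  calc ∑ z : Z, (w z c - Ew c) * ((∑ a : Bool, ∑ y' : Y, p a y' z c) * G)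
      = (∑ z : Z, w z c * (∑ a : Bool, ∑ y' : Y, p a y' z c)) * G
        - (Ew c * G) * ∑ z : Z, (∑ a : Bool, ∑ y' : Y, p a y' z c) := by
        rw [Finset.sum_congr rfl fun z _ =>
          (by ring : (w z c - Ew c) * ((∑ a : Bool, ∑ y' : Y, p a y' z c) * G)
            = w z c * (∑ a : Bool, ∑ y' : Y, p a y' z c) * G
              - (Ew c * G) * (∑ a : Bool, ∑ y' : Y, p a y' z c)),
          Finset.sum_sub_distrib, ← Finset.sum_mul, ← Finset.mul_sum]
    _ = 0 := by rw [hQzT, ← hEwT]; ring
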